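/- arXiv:2602.18197 — 2 statements merged into one kernel-verified Lean document; each statement's English description precedes it below -/
import Mathlib

section
/- Let Γ ↷ X be an action on a Hausdorff space such that the collection of regular supports {rsupp(γ) : γ ∈ Γ} forms a basis for the topology of X. If ρ₁, ρ₂ : Y → X both satisfy ρᵢ⁻¹(rsupp_X(γ)) = rsupp_Y(Φ(γ)) for all γ ∈ Γ (for a fixed homomorphism Φ : Γ → Homeo(Y)), then ρ₁ = ρ₂. -/
def openSupp {G X : Type*} [Group G] [MulAction G X] (γ : G) : Set X :=
  {x | γ • x ≠ x}

def rsupp {G X : Type*} [Group G] [TopologicalSpace X] [MulAction G X] (γ : G) : Set X :=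
  interior (closure (openSupp γ))

/-- If the regular supports form a basis of the Hausdorff space `X`, then anchor maps
are unique: any two maps `ρ₁, ρ₂ : Y → X` with `ρᵢ⁻¹(rsupp_X γ) = rsupp_Y (Φ γ)`
for all `γ` coincide. -/
theorem anchor_map_unique
    {G H X Y : Type*} [Group G] [Group H]
    [TopologicalSpace X] [TopologicalSpace Y] [T2Space X]
    [MulAction G X] [MulAction H Y]
    (hbasis : TopologicalSpace.IsTopologicalBasis
      {s : Set X | ∃ γ : G, s = rsupp (X := X) γ})
    (Φ : G →* H) (ρ₁ ρ₂ : Y → X)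
    (h₁ : ∀ γ : G, ρ₁ ⁻¹' (rsupp (X := X) γ) = rsupp (X := Y) (Φ γ))
    (h₂ : ∀ γ : G, ρ₂ ⁻¹' (rsupp (X := X) γ) = rsupp (X := Y) (Φ γ)) :
    ρ₁ = ρ₂ := by
  funext y
  by_contra hne
  obtain ⟨U, V, hU, hV, hyU, hyV, hUV⟩ := t2_separation hne
  obtain ⟨s, ⟨γ, rfl⟩, hy, hsub⟩ := hbasis.exists_subset_of_mem_open hyU hU
  have : y ∈ ρ₂ ⁻¹' (rsupp (X := X) γ) := by
    rw [h₂, ← h₁]; exact hy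
  exact Set.disjoint_left.mp hUV (hsub this) hyV
end

section
/- In the generalized Brin–Thompson group V_{k₁,...,k_m} acting on X = ∏ᵢ {0,...,kᵢ-1}^ℕ, the regular support of the homeomorphism induced by a table (v; u) equals the union of the cylinder sets ∏ᵢ uᵢ^{(j)} X_{kᵢ} over those indices j with u^{(j)} ≠ v^{(j)}; equivalently, within each cylinder u^{(j)}X with u^{(j)} ≠ v^{(j)}, the set of fixed points of the induced homeomorphism is nowhere dense. -/
/-- Append a finite word in front of an infinite sequence. -/
def wordAppend {α : Type*} (w : List α) (s : ℕ → α) : ℕ → α :=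
  fun n => if h : n < w.length then w.get ⟨n, h⟩ else s (n - w.length)

/-- Append a tuple of finite words coordinatewise. -/
def tupleAppend {m : ℕ} {k : Fin m → ℕ} (w : ∀ i : Fin m, List (Fin (k i)))
    (x : ∀ i : Fin m, ℕ → Fin (k i)) : ∀ i : Fin m, ℕ → Fin (k i) :=
  fun i => wordAppend (w i) (x i)

/-- The cylinder set of a tuple of finite words. -/
def cyl {m : ℕ} {k : Fin m → ℕ} (w : ∀ i : Fin m, List (Fin (k i))) :
    Set (∀ i : Fin m, ℕ → Fin (k i)) :=
  Set.range (tupleAppend w)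

lemma wordAppend_left {α : Type*} (w : List α) (s : ℕ → α) (n : ℕ) (h : n < w.length) :
    wordAppend w s n = w.get ⟨n, h⟩ := dif_pos h

lemma wordAppend_right {α : Type*} (w : List α) (s : ℕ → α) (n : ℕ) :
    wordAppend w s (w.length + n) = s n := by
  simp [wordAppend, Nat.add_sub_cancel_left]

/-- Key word lemma: solutions of `p·s = q·s` for `|p| < |q|` are unique. -/
lemma fix_subsingleton_aux {α : Type*} (p q : List α) (hlt : p.length < q.length)
    (s s' : ℕ → α) (hs : wordAppend p s = wordAppend q s)
    (hs' : wordAppend p s' = wordAppend q s') : s = s' := by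
  set d := q.length - p.length with hd
  have hd0 : 0 < d := Nat.sub_pos_of_lt hlt
  have key : ∀ (t : ℕ → α), wordAppend p t = wordAppend q t → ∀ n,
      t n = if h : p.length + n < q.length then q.get ⟨p.length + n, h⟩ else t (n - d) := by
    intro t ht n
    have := congrFun ht (p.length + n)
    rw [wordAppend_right] at this
    rw [this]
    unfold wordAppend
    split_ifs with h
    · rfl
    · congr 1
      omega
  funext n
  induction n using Nat.strong_induction_on with
  | _ n ih =>
    rw [key s hs n, key s' hs' n]
    split_ifs with h
    · rfl
    · exact ih (n - d) (by omega)

/-- Solutions of `p·s = q·s` for `p ≠ q` form a subsingleton. -/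
lemma fix_subsingleton {α : Type*} {p q : List α} (hpq : p ≠ q) :
    {s : ℕ → α | wordAppend p s = wordAppend q s}.Subsingleton := by
  intro s hs s' hs'
  simp only [Set.mem_setOf_eq] at hs hs'
  rcases lt_trichotomy p.length q.length with h | h | h
  · exact fix_subsingleton_aux p q h s s' hs hs'
  · exfalso; apply hpq
    apply List.ext_get h
    intro n h1 h2
    have := congrFun hs n
    rw [wordAppend_left p s n h1, wordAppend_left q s n h2] at this
    exact this
  · exact fix_subsingleton_aux q p h s s' hs.symm hs'.symm

lemma mem_cyl_iff {m : ℕ} {k : Fin m → ℕ} (w : ∀ i : Fin m, List (Fin (k i)))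
    (x : ∀ i : Fin m, ℕ → Fin (k i)) :
    x ∈ cyl w ↔ ∀ i, ∀ n, ∀ h : n < (w i).length, x i n = (w i).get ⟨n, h⟩ := by
  constructor
  · rintro ⟨y, rfl⟩ i n h
    exact dif_pos h
  · intro hx
    refine ⟨fun i n => x i (n + (w i).length), ?_⟩
    funext i n
    unfold tupleAppend wordAppend
    split_ifs with h
    · exact (hx i n h).symm
    · have hn : n - (w i).length + (w i).length = n := by omega
      simp only [hn]

lemma isClopen_cyl {m : ℕ} {k : Fin m → ℕ} (w : ∀ i : Fin m, List (Fin (k i))) :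
    IsClopen (cyl w) := by
  have : cyl w = ⋂ (i : Fin m), ⋂ (n : Fin (w i).length),
      {x : ∀ i : Fin m, ℕ → Fin (k i) | x i n.1 = (w i).get n} := by
    ext x
    simp only [mem_cyl_iff, Set.mem_iInter, Set.mem_setOf_eq]
    exact ⟨fun h i n => h i n.1 n.2, fun h i n hn => h i ⟨n, hn⟩⟩
  rw [this]
  refine isClopen_iInter_of_finite fun i => isClopen_iInter_of_finite fun n => ?_
  have hc : Continuous fun x : ∀ i : Fin m, ℕ → Fin (k i) => x i n.1 :=
    (continuous_apply _).comp (continuous_apply i)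
  have : {x : ∀ i : Fin m, ℕ → Fin (k i) | x i n.1 = (w i).get n}
      = (fun x : ∀ i : Fin m, ℕ → Fin (k i) => x i n.1) ⁻¹' {(w i).get n} := rfl
  rw [this]
  exact ⟨(isClosed_discrete _).preimage hc, (isOpen_discrete _).preimage hc⟩

/-- For the homeomorphism of `∏ᵢ {0,…,kᵢ-1}^ℕ` induced by a table `(v; u)`, the regular
support is the union of the cylinders `uʲ·X` over the indices `j` with `uʲ ≠ vʲ`;
equivalently, in each such cylinder the fixed-point set is nowhere dense. -/
theorem brinThompson_table_rsupp (m l : ℕ) (k : Fin m → ℕ) (hk : ∀ i, 2 ≤ k i)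
    (v u : Fin l → ∀ i : Fin m, List (Fin (k i)))
    (hv : ∀ x, ∃! j : Fin l, x ∈ cyl (v j))
    (hu : ∀ x, ∃! j : Fin l, x ∈ cyl (u j))
    (ψ : (∀ i : Fin m, ℕ → Fin (k i)) ≃ₜ (∀ i : Fin m, ℕ → Fin (k i)))
    (hψ : ∀ (j : Fin l) (x), ψ (tupleAppend (v j) x) = tupleAppend (u j) x) :
    (interior (closure {x | ψ x ≠ x})
        = ⋃ (j : Fin l) (_ : u j ≠ v j), cyl (u j)) ∧
    ∀ j : Fin l, u j ≠ v j → IsNowhereDense ({x | ψ x = x} ∩ cyl (u j)) := by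
  set F : Set (∀ i : Fin m, ℕ → Fin (k i)) := {x | ψ x = x} with hF
  -- any fixed point in `cyl (u j)` comes from a common preimage for `v j` and `u j`
  have hfix : ∀ (j : Fin l), ∀ x ∈ F ∩ cyl (u j),
      ∃ y, tupleAppend (v j) y = x ∧ tupleAppend (u j) y = x := by
    intro j x hx
    obtain ⟨j', hj', -⟩ := hv x
    obtain ⟨y, hy⟩ := hj'
    have hψx : ψ x = tupleAppend (u j') y := by rw [← hy, hψ]
    have hx' : x = tupleAppend (u j') y := by rw [← hψx]; exact hx.1.symm
    have hjj : j' = j := (hu x).unique ⟨y, hx'.symm⟩ hx.2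
    subst hjj
    exact ⟨y, hy, hx'.symm⟩
  -- rigidity: in each bad cylinder all fixed points share a coordinate sequence
  have hsame : ∀ (j : Fin l), u j ≠ v j → ∃ i₀ : Fin m,
      ∀ x ∈ F ∩ cyl (u j), ∀ x' ∈ F ∩ cyl (u j), x i₀ = x' i₀ := by
    intro j hj
    obtain ⟨i₀, hi₀⟩ := Function.ne_iff.mp hj
    refine ⟨i₀, fun x hx x' hx' => ?_⟩
    obtain ⟨y, hy1, hy2⟩ := hfix j x hx
    obtain ⟨y', hy1', hy2'⟩ := hfix j x' hx'
    have hyS : y i₀ ∈ {s | wordAppend (v j i₀) s = wordAppend (u j i₀) s} := by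
      show wordAppend (v j i₀) (y i₀) = wordAppend (u j i₀) (y i₀)
      have := congrFun (congrFun (hy1.trans hy2.symm) i₀)
      exact funext this
    have hyS' : y' i₀ ∈ {s | wordAppend (v j i₀) s = wordAppend (u j i₀) s} := by
      show wordAppend (v j i₀) (y' i₀) = wordAppend (u j i₀) (y' i₀)
      have := congrFun (congrFun (hy1'.trans hy2'.symm) i₀)
      exact funext this
    have hyy : y i₀ = y' i₀ := fix_subsingleton (fun h => hi₀ h.symm) hyS hyS'
    calc x i₀ = wordAppend (v j i₀) (y i₀) := (congrFun hy1 i₀).symm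
      _ = wordAppend (v j i₀) (y' i₀) := by rw [hyy]
      _ = x' i₀ := congrFun hy1' i₀
  -- the fixed-point set in each bad cylinder has empty interior
  have hint : ∀ (j : Fin l), u j ≠ v j → interior (F ∩ cyl (u j)) = ∅ := by
    intro j hj
    obtain ⟨i₀, hi₀⟩ := hsame j hj
    by_contra hne
    obtain ⟨x, hx⟩ := Set.nonempty_iff_ne_empty.mpr hne
    haveI : Nontrivial (Fin (k i₀)) := Fin.nontrivial_iff_two_le.mpr (hk i₀)
    choose b hb using fun N : ℕ => exists_ne (x i₀ N)
    set seq : ℕ → ∀ i : Fin m, ℕ → Fin (k i) :=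
      fun N => Function.update x i₀ (Function.update (x i₀) N (b N)) with hseq
    have htend : Filter.Tendsto seq Filter.atTop (nhds x) := by
      rw [tendsto_pi_nhds]
      intro i
      by_cases hii : i = i₀
      · subst hii
        rw [tendsto_pi_nhds]
        intro n
        have hev : (fun N => seq N i n) =ᶠ[Filter.atTop] fun _ => x i n := by
          filter_upwards [Filter.eventually_gt_atTop n] with N hN
          simp only [hseq, Function.update_self]
          exact Function.update_of_ne (by omega) _ _
        exact (tendsto_const_nhds : Filter.Tendsto (fun _ : ℕ => x i n)
            Filter.atTop (nhds (x i n))).congr' hev.symm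
      · have : (fun N => seq N i) = fun _ => x i := by
          funext N
          exact Function.update_of_ne hii _ _
        rw [this]
        exact tendsto_const_nhds
    have hmem : interior (F ∩ cyl (u j)) ∈ nhds x := (isOpen_interior).mem_nhds hx
    obtain ⟨N, hN⟩ := (htend.eventually_mem hmem).exists
    have hNset : seq N ∈ F ∩ cyl (u j) := interior_subset hN
    have hxset : x ∈ F ∩ cyl (u j) := interior_subset hx
    have : x i₀ = seq N i₀ := hi₀ x hxset (seq N) hNset
    have : x i₀ N = seq N i₀ N := congrFun this N
    rw [hseq] at this
    simp only [Function.update_self] at this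
    exact hb N this.symm
  -- each fixed-point intersection is closed
  have hclosed : ∀ j : Fin l, IsClosed (F ∩ cyl (u j)) := fun j =>
    (isClosed_eq ψ.continuous continuous_id).inter (isClopen_cyl (u j)).isClosed
  have hND : ∀ j : Fin l, u j ≠ v j → IsNowhereDense (F ∩ cyl (u j)) := fun j hj =>
    (hclosed j).isNowhereDense_iff.mpr (hint j hj)
  refine ⟨?_, hND⟩
  set U : Set (∀ i : Fin m, ℕ → Fin (k i)) := ⋃ (j : Fin l) (_ : u j ≠ v j), cyl (u j)
    with hU
  have hUopen : IsOpen U :=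
    isOpen_iUnion fun j => isOpen_iUnion fun _ => (isClopen_cyl (u j)).isOpen
  have hUclosed : IsClosed U := by
    refine isClosed_iUnion_of_finite fun j => ?_
    by_cases h : u j ≠ v j
    · rw [Set.iUnion_eq_if, if_pos h]; exact (isClopen_cyl (u j)).isClosed
    · rw [Set.iUnion_eq_if, if_neg h]; exact isClosed_empty
  have hsub : {x | ψ x ≠ x} ⊆ U := by
    intro x hx
    obtain ⟨j, hj, -⟩ := hu x
    have hjne : u j ≠ v j := by
      intro heq
      obtain ⟨y, hy⟩ := hj
      apply hx
      show ψ x = x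
      rw [← hy, heq, hψ, heq]
    exact Set.mem_iUnion.mpr ⟨j, Set.mem_iUnion.mpr ⟨hjne, hj⟩⟩
  apply subset_antisymm
  · exact (interior_subset).trans (closure_minimal hsub hUclosed)
  · refine interior_maximal ?_ hUopen
    intro x hx
    simp only [hU, Set.mem_iUnion] at hx
    obtain ⟨j, hj, hxj⟩ := hx
    have hcompl : {x | ψ x ≠ x} = Fᶜ := rfl
    rw [hcompl, closure_compl]
    intro hxint
    have : x ∈ interior (F ∩ cyl (u j)) := by
      rw [interior_inter, (isClopen_cyl (u j)).isOpen.interior_eq]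
      exact ⟨hxint, hxj⟩
    rw [hint j hj] at this
    exact this
end
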